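/- For every controlled Markov process and every discount factor γ ∈ (0,1), the set of γ-discounted state distributions induced by non-Markovian policies equals the set induced by Markovian policies: {d_γ^π : π non-Markovian} = {d_γ^π : π Markovian}, where d_γ^π(s) = (1−γ) Σ_{t=0}^∞ γ^t d_t^π(s). -/

import Mathlib

open scoped BigOperators

/-- A controlled Markov process over finite state space `S` and action space `A`:
a transition kernel `P` and an initial distribution `μ`. -/
structure CMP (S A : Type) [Fintype S] [Fintype A] where
  P : S → A → S → ℝ
  P_nonneg : ∀ s a s', 0 ≤ P s a s'
  P_sum_one : ∀ s a, ∑ s', P s a s' = 1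
  μ : S → ℝ
  μ_nonneg : ∀ s, 0 ≤ μ s
  μ_sum_one : ∑ s, μ s = 1

/-- A history of `t` steps: states `s_0, …, s_t` and actions `a_0, …, a_{t-1}`. -/
abbrev Hist (S A : Type) (t : ℕ) : Type := (Fin (t + 1) → S) × (Fin t → A)

/-- A continuation of `k` further steps: actions `a_0, …, a_{k-1}` together with the
states those actions lead to. -/
abbrev Contin (S A : Type) (k : ℕ) : Type := (Fin k → A) × (Fin k → S)

/-- A general (possibly non-Markovian, possibly randomized) policy: for every time `t`
and history of length `t`, a probability distribution over actions. -/
structure Policy (S A : Type) [Fintype A] where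
  p : ∀ t : ℕ, Hist S A t → A → ℝ
  nonneg : ∀ t h a, 0 ≤ p t h a
  sum_one : ∀ t h, ∑ a, p t h a = 1

/-- A Markovian (randomized, time-dependent) policy: for every time `t` and current
state `s`, a probability distribution over actions. -/
structure MPolicy (S A : Type) [Fintype A] where
  p : ℕ → S → A → ℝ
  nonneg : ∀ t s a, 0 ≤ p t s a
  sum_one : ∀ t s, ∑ a, p t s a = 1

/-- The last (current) state of a history. -/
def lastState {S A : Type} {t : ℕ} (h : Hist S A t) : S := h.1 (Fin.last t)

/-- A Markovian policy viewed as a general policy. -/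
def MPolicy.toPolicy {S A : Type} [Fintype A] (m : MPolicy S A) : Policy S A where
  p := fun t h a => m.p t (lastState h) a
  nonneg := fun t h a => m.nonneg t _ a
  sum_one := fun t h => m.sum_one t _

/-- The general policy induced by a deterministic non-Markovian policy
(a function from histories to actions). -/
def detPolicy {S A : Type} [Fintype A] [DecidableEq A] (f : ∀ t : ℕ, Hist S A t → A) :
    Policy S A where
  p := fun t h a => if a = f t h then 1 else 0
  nonneg := by intro t h a; split <;> norm_num
  sum_one := by intro t h; simp

/-- The length-`i` prefix of a history. -/
def histTake {S A : Type} {t : ℕ} (h : Hist S A t) (i : ℕ) (hi : i ≤ t) : Hist S A i :=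
  (fun j => h.1 ⟨(j : ℕ), by have := j.isLt; omega⟩,
   fun j => h.2 ⟨(j : ℕ), by have := j.isLt; omega⟩)

/-- The probability that policy `π` generates the history `h` when interacting with
the CMP `M` (initial state from `μ`, actions from `π`, transitions from `P`). -/
noncomputable def histProb {S A : Type} [Fintype S] [Fintype A]
    (M : CMP S A) (π : Policy S A) {t : ℕ} (h : Hist S A t) : ℝ :=
  M.μ (h.1 0) * ∏ i : Fin t,
    (π.p i (histTake h i (Nat.le_of_lt i.isLt)) (h.2 i) *
      M.P (h.1 i.castSucc) (h.2 i) (h.1 i.succ))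

/-- The `t`-step state distribution `d_t^π(s) = Pr(s_t = s)`. -/
noncomputable def stateDist {S A : Type} [Fintype S] [Fintype A] [DecidableEq S]
    (M : CMP S A) (π : Policy S A) (t : ℕ) (s : S) : ℝ :=
  ∑ h : Hist S A t, if lastState h = s then histProb M π h else 0

/-- Shannon entropy of a distribution on a finite set (`0 log 0 = 0` since `Real.log 0 = 0`). -/
noncomputable def entropy {S : Type} [Fintype S] (d : S → ℝ) : ℝ :=
  -∑ s, d s * Real.log (d s)

/-- The state visitation frequency of a trajectory with `n+1` states. -/
noncomputable def visitFreq {S A : Type} [Fintype S] [DecidableEq S] {n : ℕ}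
    (h : Hist S A n) (s : S) : ℝ :=
  (∑ i : Fin (n + 1), if h.1 i = s then (1 : ℝ) else 0) / ((n : ℝ) + 1)

/-- The marginal state distribution `d_T^π(s) = (1/T) ∑_{t<T} d_t^π(s)`. -/
noncomputable def marginalDist {S A : Type} [Fintype S] [Fintype A] [DecidableEq S]
    (M : CMP S A) (π : Policy S A) (T : ℕ) (s : S) : ℝ :=
  (1 / (T : ℝ)) * ∑ t ∈ Finset.range T, stateDist M π t s

/-- The `γ`-discounted state distribution `d_γ^π(s) = (1-γ) ∑_t γ^t d_t^π(s)`. -/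
noncomputable def discountedDist {S A : Type} [Fintype S] [Fintype A] [DecidableEq S]
    (M : CMP S A) (π : Policy S A) (γ : ℝ) (s : S) : ℝ :=
  (1 - γ) * ∑' t : ℕ, γ ^ t * stateDist M π t s

/-- Concatenation of a length-`t` history with a `k`-step continuation. -/
def histAppend {S A : Type} {t k : ℕ} (h : Hist S A t) (c : Contin S A k) : Hist S A (t + k) :=
  (fun j => if hj : (j : ℕ) ≤ t then h.1 ⟨(j : ℕ), by omega⟩
            else c.2 ⟨(j : ℕ) - t - 1, by have := j.isLt; omega⟩,
   fun j => if hj : (j : ℕ) < t then h.2 ⟨(j : ℕ), hj⟩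
            else c.1 ⟨(j : ℕ) - t, by have := j.isLt; omega⟩)

/-- The probability that, after the prefix history `h`, running `π` (conditioned on the
full history) produces the `k`-step continuation `c`. -/
noncomputable def contProb {S A : Type} [Fintype S] [Fintype A]
    (M : CMP S A) (π : Policy S A) {t k : ℕ} (h : Hist S A t) (c : Contin S A k) : ℝ :=
  ∏ i : Fin k,
    (π.p (t + (i : ℕ))
        (histTake (histAppend h c) (t + (i : ℕ)) (by have := i.isLt; omega))
        ((histAppend h c).2 ⟨t + (i : ℕ), by have := i.isLt; omega⟩) *
      M.P ((histAppend h c).1 ⟨t + (i : ℕ), by have := i.isLt; omega⟩)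
        ((histAppend h c).2 ⟨t + (i : ℕ), by have := i.isLt; omega⟩)
        ((histAppend h c).1 ⟨t + (i : ℕ) + 1, by have := i.isLt; omega⟩))

/-- The expected entropy of the state visitation frequency of the completed trajectory,
when running `π` for `k` further steps after the prefix history `h`. -/
noncomputable def expEntFrom {S A : Type} [Fintype S] [Fintype A] [DecidableEq S]
    (M : CMP S A) (π : Policy S A) {t : ℕ} (k : ℕ) (h : Hist S A t) : ℝ :=
  ∑ c : Contin S A k, contProb M π h c * entropy (visitFreq (histAppend h c))

/-- A history has positive probability (under some policy) iff its initial state and all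
its transitions have positive probability. -/
def Reachable {S A : Type} [Fintype S] [Fintype A] (M : CMP S A) {t : ℕ}
    (h : Hist S A t) : Prop :=
  0 < M.μ (h.1 0) ∧ ∀ i : Fin t, 0 < M.P (h.1 i.castSucc) (h.2 i) (h.1 i.succ)

section MarkovizeAux

variable {S A : Type} [Fintype S] [Fintype A] [DecidableEq S]

/-- Joint probability of being in state `s` at time `t` and taking action `a`. -/
noncomputable def saDist (M : CMP S A) (π : Policy S A) (t : ℕ) (s : S) (a : A) : ℝ :=
  ∑ h : Hist S A t, if lastState h = s then histProb M π h * π.p t h a else 0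

lemma histProb_nonneg (M : CMP S A) (π : Policy S A) {t : ℕ} (h : Hist S A t) :
    0 ≤ histProb M π h :=
  mul_nonneg (M.μ_nonneg _) (Finset.prod_nonneg fun i _ =>
    mul_nonneg (π.nonneg _ _ _) (M.P_nonneg _ _ _))

lemma stateDist_nonneg (M : CMP S A) (π : Policy S A) (t : ℕ) (s : S) :
    0 ≤ stateDist M π t s :=
  Finset.sum_nonneg fun h _ => by
    by_cases hc : lastState h = s <;> simp [stateDist, hc, histProb_nonneg]

lemma saDist_nonneg (M : CMP S A) (π : Policy S A) (t : ℕ) (s : S) (a : A) :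
    0 ≤ saDist M π t s a :=
  Finset.sum_nonneg fun h _ => by
    by_cases hc : lastState h = s <;>
      simp [hc, mul_nonneg (histProb_nonneg M π h) (π.nonneg t h a)]

lemma sum_saDist (M : CMP S A) (π : Policy S A) (t : ℕ) (s : S) :
    ∑ a, saDist M π t s a = stateDist M π t s := by
  unfold saDist stateDist
  rw [Finset.sum_comm]
  refine Finset.sum_congr rfl fun h _ => ?_
  by_cases hc : lastState h = s
  · simp [hc, ← Finset.mul_sum, π.sum_one]
  · simp [hc]

lemma stateDist_zero (M : CMP S A) (π : Policy S A) (s : S) :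
    stateDist M π 0 s = M.μ s := by
  unfold stateDist histProb lastState
  rw [Fintype.sum_prod_type]
  rw [Fintype.sum_equiv (Equiv.funUnique (Fin 1) S)
    _ (fun s' => if s' = s then M.μ s' else 0) ?_]
  · simp
  · intro x
    rw [Fintype.sum_unique]
    simp [Equiv.funUnique]

lemma snoc_lt {n : ℕ} {α : Type} (f : Fin n → α) (x : α) (m : ℕ) (hm : m < n)
    (hm2 : m < n + 1) :
    (Fin.snoc f x : Fin (n + 1) → α) ⟨m, hm2⟩ = f ⟨m, hm⟩ := by
  have h0 : (⟨m, hm2⟩ : Fin (n + 1)) = Fin.castSucc ⟨m, hm⟩ := Fin.ext rfl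
  rw [h0]
  exact Fin.snoc_castSucc _ _ _

/-- Extend a history by one action and one state. -/
def histSnoc {t : ℕ} (h : Hist S A t) (a : A) (s' : S) : Hist S A (t + 1) :=
  (Fin.snoc h.1 s', Fin.snoc h.2 a)

lemma histSnoc_fst_castSucc {t : ℕ} (h : Hist S A t) (a : A) (s' : S) (j : Fin (t + 1)) :
    (histSnoc h a s').1 j.castSucc = h.1 j := by
  show (Fin.snoc h.1 s' : Fin (t + 2) → S) j.castSucc = h.1 j
  exact Fin.snoc_castSucc _ _ _

lemma histSnoc_snd_castSucc {t : ℕ} (h : Hist S A t) (a : A) (s' : S) (j : Fin t) :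
    (histSnoc h a s').2 j.castSucc = h.2 j := by
  show (Fin.snoc h.2 a : Fin (t + 1) → A) j.castSucc = h.2 j
  exact Fin.snoc_castSucc _ _ _

lemma histSnoc_fst_last {t : ℕ} (h : Hist S A t) (a : A) (s' : S) :
    (histSnoc h a s').1 (Fin.last (t + 1)) = s' := by
  show (Fin.snoc h.1 s' : Fin (t + 2) → S) (Fin.last (t + 1)) = s'
  exact Fin.snoc_last _ _

lemma histSnoc_snd_last {t : ℕ} (h : Hist S A t) (a : A) (s' : S) :
    (histSnoc h a s').2 (Fin.last t) = a := by
  show (Fin.snoc h.2 a : Fin (t + 1) → A) (Fin.last t) = a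
  exact Fin.snoc_last _ _

lemma histTake_snoc {t : ℕ} (h : Hist S A t) (a : A) (s' : S) (i : ℕ) (hi : i ≤ t)
    (hi' : i ≤ t + 1) :
    histTake (histSnoc h a s') i hi' = histTake h i hi := by
  unfold histTake histSnoc
  refine Prod.ext ?_ ?_
  · funext j
    exact snoc_lt h.1 s' (↑j) (by have := j.isLt; omega) (by have := j.isLt; omega)
  · funext j
    exact snoc_lt h.2 a (↑j) (by have := j.isLt; omega) (by have := j.isLt; omega)

lemma histTake_self {t : ℕ} (h : Hist S A t) (hi : t ≤ t) : histTake h t hi = h := by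
  unfold histTake
  exact Prod.ext (funext fun j => rfl) (funext fun j => rfl)

lemma histProb_snoc (M : CMP S A) (π : Policy S A) {t : ℕ} (h : Hist S A t)
    (a : A) (s' : S) :
    histProb M π (histSnoc h a s')
      = histProb M π h * (π.p t h a * M.P (lastState h) a s') := by
  unfold histProb
  rw [Fin.prod_univ_castSucc, ← mul_assoc]
  simp only [Fin.coe_castSucc, Fin.val_last]
  congr 1
  · congr 1
    · refine Finset.prod_congr rfl fun i _ => ?_
      rw [histTake_snoc h a s' (↑i) (Nat.le_of_lt i.isLt) (by have := i.isLt; omega)]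
      rw [Fin.succ_castSucc, histSnoc_snd_castSucc, histSnoc_fst_castSucc,
        histSnoc_fst_castSucc]
  · rw [histTake_snoc h a s' t le_rfl (by omega), histTake_self]
    rw [Fin.succ_last, histSnoc_snd_last, histSnoc_fst_last, histSnoc_fst_castSucc]
    rfl

/-- The equivalence between histories of length `t+1` and (history, action, state). -/
def histEquiv (S A : Type) (t : ℕ) : Hist S A (t + 1) ≃ (Hist S A t) × A × S where
  toFun h := ((Fin.init h.1, Fin.init h.2), h.2 (Fin.last t), h.1 (Fin.last (t + 1)))
  invFun x := histSnoc x.1 x.2.1 x.2.2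
  left_inv h := by
    unfold histSnoc
    exact Prod.ext (Fin.snoc_init_self h.1) (Fin.snoc_init_self h.2)
  right_inv x := by
    unfold histSnoc
    simp

lemma lastState_snoc {t : ℕ} (h : Hist S A t) (a : A) (s' : S) :
    lastState (histSnoc h a s') = s' := by
  unfold lastState histSnoc
  show (Fin.snoc h.1 s' : Fin (t + 2) → S) (Fin.last (t + 1)) = s'
  exact Fin.snoc_last _ _

lemma stateDist_succ (M : CMP S A) (π : Policy S A) (t : ℕ) (s' : S) :
    stateDist M π (t + 1) s' = ∑ s, ∑ a, saDist M π t s a * M.P s a s' := by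
  unfold stateDist
  rw [← Equiv.sum_comp (histEquiv S A t).symm
    (fun h => if lastState h = s' then histProb M π h else 0)]
  have key : ∀ x : (Hist S A t) × A × S,
      (if lastState ((histEquiv S A t).symm x) = s'
        then histProb M π ((histEquiv S A t).symm x) else 0)
      = if x.2.2 = s' then histProb M π x.1 * (π.p t x.1 x.2.1 * M.P (lastState x.1) x.2.1 x.2.2)
        else 0 := by
    intro x
    have hs : (histEquiv S A t).symm x = histSnoc x.1 x.2.1 x.2.2 := rfl
    rw [hs, lastState_snoc, histProb_snoc]
  rw [Fintype.sum_congr _ _ key]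
  rw [Fintype.sum_prod_type]
  -- LHS : ∑ h, ∑ y : A × S, ...
  have lhs_eq : ∀ h : Hist S A t,
      (∑ y : A × S, if y.2 = s' then
          histProb M π h * (π.p t h y.1 * M.P (lastState h) y.1 y.2) else 0)
      = ∑ a, histProb M π h * (π.p t h a * M.P (lastState h) a s') := by
    intro h
    rw [Fintype.sum_prod_type]
    refine Finset.sum_congr rfl fun a _ => ?_
    rw [Finset.sum_ite_eq' Finset.univ s'
      (fun y => histProb M π h * (π.p t h a * M.P (lastState h) a y))]
    simp
  rw [Fintype.sum_congr _ _ lhs_eq]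
  -- RHS
  have rhs_eq : ∀ s : S, ∀ a : A, saDist M π t s a * M.P s a s'
      = ∑ h : Hist S A t,
          if lastState h = s then histProb M π h * (π.p t h a * M.P s a s') else 0 := by
    intro s a
    unfold saDist
    rw [Finset.sum_mul]
    refine Finset.sum_congr rfl fun h _ => ?_
    by_cases hc : lastState h = s
    · simp [hc, mul_assoc]
    · simp [hc]
  have rhs_all : ∑ s, ∑ a, saDist M π t s a * M.P s a s'
      = ∑ s, ∑ a, ∑ h : Hist S A t,
          if lastState h = s then histProb M π h * (π.p t h a * M.P s a s') else 0 :=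
    Finset.sum_congr rfl fun s _ => Finset.sum_congr rfl fun a _ => rhs_eq s a
  rw [rhs_all]
  rw [Finset.sum_comm]
  conv_rhs => rw [Finset.sum_comm]
  refine Finset.sum_congr rfl fun a _ => ?_
  conv_rhs => rw [Finset.sum_comm]
  refine Finset.sum_congr rfl fun h _ => ?_
  rw [Finset.sum_ite_eq Finset.univ (lastState h)
    (fun s => histProb M π h * (π.p t h a * M.P s a s'))]
  simp

lemma saDist_toPolicy (M : CMP S A) (m : MPolicy S A) (t : ℕ) (s : S) (a : A) :
    saDist M m.toPolicy t s a = stateDist M m.toPolicy t s * m.p t s a := by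
  unfold saDist stateDist
  rw [Finset.sum_mul]
  refine Finset.sum_congr rfl fun h _ => ?_
  by_cases hc : lastState h = s
  · simp only [hc, if_true, MPolicy.toPolicy]
  · simp [hc]

/-- The markovization of a policy: the Markov policy with the same per-step
state-action marginals. -/
noncomputable def markovize [Nonempty A] (M : CMP S A) (π : Policy S A) : MPolicy S A where
  p := fun t s a => if 0 < stateDist M π t s
        then saDist M π t s a / stateDist M π t s else (Fintype.card A : ℝ)⁻¹
  nonneg := by
    intro t s a
    split
    · exact div_nonneg (saDist_nonneg M π t s a) (le_of_lt (by assumption))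
    · positivity
  sum_one := by
    intro t s
    by_cases hpos : 0 < stateDist M π t s
    · simp only [hpos, if_true]
      rw [← Finset.sum_div, sum_saDist, div_self (ne_of_gt hpos)]
    · simp only [hpos, if_false, Finset.sum_const, Finset.card_univ, nsmul_eq_mul]
      rw [mul_inv_cancel₀]
      exact_mod_cast Fintype.card_ne_zero

lemma stateDist_markovize [Nonempty A] (M : CMP S A) (π : Policy S A) :
    ∀ (t : ℕ) (s : S), stateDist M (markovize M π).toPolicy t s = stateDist M π t s := by
  intro t
  induction t with
  | zero => intro s; rw [stateDist_zero, stateDist_zero]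
  | succ t ih =>
    intro s'
    rw [stateDist_succ, stateDist_succ]
    refine Finset.sum_congr rfl fun s _ => Finset.sum_congr rfl fun a _ => ?_
    congr 1
    rw [saDist_toPolicy, ih s]
    show stateDist M π t s * (if 0 < stateDist M π t s
        then saDist M π t s a / stateDist M π t s else (Fintype.card A : ℝ)⁻¹)
      = saDist M π t s a
    by_cases hpos : 0 < stateDist M π t s
    · rw [if_pos hpos, mul_div_cancel₀ _ (ne_of_gt hpos)]
    · have hd : stateDist M π t s = 0 :=
        le_antisymm (not_lt.mp hpos) (stateDist_nonneg M π t s)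
      have hsa : saDist M π t s a = 0 := by
        have hsum : ∑ a, saDist M π t s a = 0 := by rw [sum_saDist, hd]
        exact (Finset.sum_eq_zero_iff_of_nonneg
          (fun a _ => saDist_nonneg M π t s a)).mp hsum a (Finset.mem_univ a)
      rw [hd, hsa, zero_mul]

end MarkovizeAux

/-- for every discount factor `γ ∈ (0,1)`, the set of `γ`-discounted state
distributions induced by non-Markovian policies equals the set induced by Markovian
policies. -/
theorem discounted_state_distributions_eq
    {S A : Type} [Fintype S] [Fintype A] [Nonempty S] [Nonempty A] [DecidableEq S]
    (M : CMP S A) (γ : ℝ) (hγ : γ ∈ Set.Ioo (0 : ℝ) 1) :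
    {f : S → ℝ | ∃ π : Policy S A, f = fun s => discountedDist M π γ s}
      = {f : S → ℝ | ∃ π' : MPolicy S A, f = fun s => discountedDist M π'.toPolicy γ s} := by
  ext f
  simp only [Set.mem_setOf_eq]
  constructor
  · rintro ⟨π, rfl⟩
    refine ⟨markovize M π, funext fun s => ?_⟩
    unfold discountedDist
    congr 1
    exact tsum_congr fun t => by rw [stateDist_markovize]
  · rintro ⟨m, rfl⟩
    exact ⟨m.toPolicy, rfl⟩
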